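/- Let λ = (λ₁, λ₂, …, λ_N) be a partition with at most N parts, and let λ' denote its conjugate partition. Then the sets A = {λ'_i - i + 1/2 : 1 ≤ i ≤ N, λ'_i - i + 1/2 > 0} and B = {-λ_i + i - 1/2 : 1 ≤ i ≤ N, λ_i - i + 1/2 < 0} are disjoint. -/
import Mathlib


/-- The conjugate partition: `conj N lam i = #{j : 1 ≤ j ≤ N, lam j ≥ i}`. -/
def conj (N : ℕ) (lam : ℕ → ℕ) (i : ℕ) : ℕ :=
  ((Finset.Icc 1 N).filter (fun j => i ≤ lam j)).card

lemma conj_ge (N : ℕ) (lam : ℕ → ℕ)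
    (hmono : ∀ i j, 1 ≤ i → i ≤ j → j ≤ N → lam j ≤ lam i)
    {i j : ℕ} (hj1 : 1 ≤ j) (hjN : j ≤ N) (h : i ≤ lam j) :
    j ≤ conj N lam i := by
  have hsub : Finset.Icc 1 j ⊆ (Finset.Icc 1 N).filter (fun k => i ≤ lam k) := by
    intro k hk
    simp only [Finset.mem_Icc] at hk
    simp only [Finset.mem_filter, Finset.mem_Icc]
    exact ⟨⟨hk.1, hk.2.trans hjN⟩, le_trans (h.trans (hmono k j hk.1 hk.2 hjN)) le_rfl⟩
  have := Finset.card_le_card hsub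
  simpa [conj, Nat.card_Icc] using this

lemma conj_lt (N : ℕ) (lam : ℕ → ℕ)
    (hmono : ∀ i j, 1 ≤ i → i ≤ j → j ≤ N → lam j ≤ lam i)
    {i j : ℕ} (hj1 : 1 ≤ j) (h : lam j < i) :
    conj N lam i ≤ j - 1 := by
  have hsub : (Finset.Icc 1 N).filter (fun k => i ≤ lam k) ⊆ Finset.Icc 1 (j - 1) := by
    intro k hk
    simp only [Finset.mem_filter, Finset.mem_Icc] at hk
    simp only [Finset.mem_Icc]
    refine ⟨hk.1.1, ?_⟩
    by_contra hlt
    push_neg at hlt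
    have hjk : j ≤ k := by omega
    have := hmono j k hj1 hjk hk.1.2
    omega
  have := Finset.card_le_card hsub
  simpa [conj, Nat.card_Icc] using this

theorem stmt0 (N : ℕ) (lam : ℕ → ℕ)
    (hmono : ∀ i j, 1 ≤ i → i ≤ j → j ≤ N → lam j ≤ lam i) :
    Disjoint
      {x : ℚ | ∃ i, 1 ≤ i ∧ i ≤ N ∧ x = (conj N lam i : ℚ) - i + 1/2 ∧ 0 < x}
      {x : ℚ | ∃ i, 1 ≤ i ∧ i ≤ N ∧ x = -(lam i : ℚ) + i - 1/2 ∧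
        (lam i : ℚ) - i + 1/2 < 0} := by
  rw [Set.disjoint_left]
  rintro x ⟨i, hi1, hiN, hx1, hxpos⟩ ⟨j, hj1, hjN, hx2, hneg⟩
  -- from hx1 = hx2, get nat equation
  have key : (conj N lam i : ℚ) + lam j = i + j - 1 := by
    rw [hx1] at hx2; linarith
  have keyn : conj N lam i + lam j + 1 = i + j := by
    have : ((conj N lam i + lam j + 1 : ℕ) : ℚ) = ((i + j : ℕ) : ℚ) := by
      push_cast; linarith
    exact_mod_cast this
  by_cases h : i ≤ lam j
  · have := conj_ge N lam hmono hj1 hjN h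
    omega
  · push_neg at h
    have := conj_lt N lam hmono hj1 h
    omega
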